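/- For every set H ⊆ G with the Baire property with respect to T, the set H ∖ int_{D_B(T)}(H) is T-meagre, where int_{D_B(T)}(H) is the interior of H in the topology D_B(T). Moreover, if S has the Baire property and is T-non-meagre, then S has non-empty D_B(T)-interior; in fact S has non-empty D_B(T)-interior inside every T-open set on which S is T-dense and T-non-meagre. -/

import Mathlib

open Set Topology TopologicalSpace

/-- `H` is `T`-locally comeagre at each of its points. -/
def DBOpen {G : Type*} [TopologicalSpace G] (H : Set G) : Prop :=
  ∀ x ∈ H, ∃ U : Set G, IsOpen U ∧ x ∈ U ∧ IsMeagre (U \ H)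

/-- For a `T`-Baire set `H`, the set `H \ int_{D_B(T)}(H)` is `T`-meagre; a
`T`-Baire `T`-non-meagre set has non-empty `D_B(T)`-interior, indeed inside
every `T`-open set on which it is `T`-dense and `T`-non-meagre. -/
theorem stmt_2 {G : Type*} [Group G] [MetricSpace G] [IsTopologicalGroup G]
    [SeparableSpace G]
    (hd : ∀ x y z : G, dist (x * z) (y * z) = dist x y)
    (τ : TopologicalSpace G)
    (hτ : ∀ S : Set G, IsOpen[τ] S ↔ DBOpen S) :
    (∀ H : Set G, (∃ U : Set G, IsOpen U ∧ IsMeagre (symmDiff H U)) →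
      IsMeagre (H \ @interior G τ H)) ∧
    (∀ S : Set G, (∃ U : Set G, IsOpen U ∧ IsMeagre (symmDiff S U)) →
      ¬ IsMeagre S → (@interior G τ S).Nonempty) ∧
    (∀ S : Set G, (∃ U : Set G, IsOpen U ∧ IsMeagre (symmDiff S U)) →
      ∀ V : Set G, IsOpen V → V.Nonempty → V ⊆ closure S → ¬ IsMeagre (S ∩ V) →
        (V ∩ @interior G τ S).Nonempty) := by
  -- Key fact: if H ≈ U (open) modulo meagre, then H ∩ U ⊆ interior_τ H
  have key : ∀ H U : Set G, IsOpen U → IsMeagre (symmDiff H U) →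
      H ∩ U ⊆ @interior G τ H := by
    intro H U hU hM
    have hopen : IsOpen[τ] (H ∩ U) := by
      rw [hτ]
      intro x hx
      refine ⟨U, hU, hx.2, ?_⟩
      have : U \ (H ∩ U) ⊆ symmDiff H U := by
        intro y hy
        rw [Set.symmDiff_def]
        exact Or.inr ⟨hy.1, fun hyH => hy.2 ⟨hyH, hy.1⟩⟩
      exact hM.mono this
    exact (IsOpen.subset_interior_iff (t := H) hopen).2 inter_subset_left
  have sub : ∀ H U : Set G, H \ U ⊆ symmDiff H U := by
    intro H U y hy
    rw [Set.symmDiff_def]; exact Or.inl hy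
  refine ⟨?_, ?_, ?_⟩
  · rintro H ⟨U, hU, hM⟩
    have : H \ @interior G τ H ⊆ symmDiff H U := by
      intro x hx
      by_cases hxU : x ∈ U
      · exact absurd (key H U hU hM ⟨hx.1, hxU⟩) hx.2
      · exact sub H U ⟨hx.1, hxU⟩
    exact hM.mono this
  · rintro S ⟨U, hU, hM⟩ hS
    rcases (S ∩ U).eq_empty_or_nonempty with he | ⟨x, hx⟩
    · exfalso
      apply hS
      have : S ⊆ symmDiff S U := by
        intro x hx
        exact sub S U ⟨hx, fun hxU => (Set.eq_empty_iff_forall_notMem.1 he x) ⟨hx, hxU⟩⟩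
      exact hM.mono this
    · exact ⟨x, key S U hU hM hx⟩
  · rintro S ⟨U, hU, hM⟩ V hV hVne hVcl hSV
    rcases (S ∩ V ∩ U).eq_empty_or_nonempty with he | ⟨x, hx⟩
    · exfalso
      apply hSV
      have : S ∩ V ⊆ symmDiff S U := by
        intro x hx
        exact sub S U ⟨hx.1, fun hxU =>
          (Set.eq_empty_iff_forall_notMem.1 he x) ⟨hx, hxU⟩⟩
      exact hM.mono this
    · exact ⟨x, hx.1.2, key S U hU hM ⟨hx.1.1, hx.2⟩⟩
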